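/- If π(n) denotes the number of primes not exceeding n, then π(n)/n tends to 0 as n → ∞ (the primes have asymptotic density zero). -/

import Mathlib

open Filter

private lemma sum_recip_primesBelow_tendsto :
    Tendsto (fun k : ℕ => ∑ p ∈ k.primesBelow, ((p : ℝ))⁻¹) atTop atTop := by
  have h0 : ∀ n : ℕ, 0 ≤ Set.indicator {p : ℕ | p.Prime} (fun n : ℕ => (1 : ℝ) / n) n := by
    intro n
    apply Set.indicator_nonneg
    intro x _
    positivity
  have h := (not_summable_iff_tendsto_nat_atTop_of_nonneg h0).mp
    not_summable_one_div_on_primes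
  convert h using 2 with k
  rw [Nat.primesBelow, Finset.sum_filter]
  refine Finset.sum_congr rfl fun n _ => ?_
  by_cases hn : n.Prime <;> simp [hn, Set.indicator_apply, one_div]

private lemma prod_one_sub_tendsto :
    Tendsto (fun k : ℕ => ∏ p ∈ k.primesBelow, (1 - ((p : ℝ))⁻¹)) atTop (nhds 0) := by
  have hnn : ∀ k : ℕ, 0 ≤ ∏ p ∈ k.primesBelow, (1 - ((p : ℝ))⁻¹) := by
    intro k
    refine Finset.prod_nonneg fun p hp => ?_
    have h2 : (2 : ℕ) ≤ p := (Nat.prime_of_mem_primesBelow hp).two_le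
    have : ((p : ℝ))⁻¹ ≤ 1 := by
      rw [inv_le_one_iff₀]
      right
      exact_mod_cast le_trans one_le_two h2
    linarith
  have hle : ∀ k : ℕ, ∏ p ∈ k.primesBelow, (1 - ((p : ℝ))⁻¹)
      ≤ Real.exp (-(∑ p ∈ k.primesBelow, ((p : ℝ))⁻¹)) := by
    intro k
    rw [← Finset.sum_neg_distrib, Real.exp_sum]
    refine Finset.prod_le_prod (fun p hp => ?_) (fun p hp => ?_)
    · have h2 : (2 : ℕ) ≤ p := (Nat.prime_of_mem_primesBelow hp).two_le
      have : ((p : ℝ))⁻¹ ≤ 1 := by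
        rw [inv_le_one_iff₀]
        right
        exact_mod_cast le_trans one_le_two h2
      linarith
    · have := Real.add_one_le_exp (-((p : ℝ))⁻¹)
      linarith
  have hexp : Tendsto (fun k : ℕ => Real.exp (-(∑ p ∈ k.primesBelow, ((p : ℝ))⁻¹)))
      atTop (nhds 0) :=
    Real.tendsto_exp_atBot.comp (tendsto_neg_atTop_atBot.comp sum_recip_primesBelow_tendsto)
  exact squeeze_zero hnn hle hexp

/-- The primes have asymptotic density zero: `π(n)/n → 0` as `n → ∞`. -/
theorem primeCounting_density_zero :
    Tendsto (fun n : ℕ => (Nat.primeCounting n : ℝ) / n) atTop (nhds 0) := by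
  rw [Metric.tendsto_atTop]
  intro ε hε
  obtain ⟨k, hk⟩ :=
    (prod_one_sub_tendsto.eventually (gt_mem_nhds (half_pos hε))).exists
  set a : ℕ := ∏ p ∈ k.primesBelow, p with ha
  have hprimes : ∀ p ∈ k.primesBelow, p.Prime := fun p hp =>
    Nat.prime_of_mem_primesBelow hp
  have ha0 : 0 < a := Finset.prod_pos fun p hp => (hprimes p hp).pos
  have hpf : a.primeFactors = k.primesBelow := Nat.primeFactors_prod hprimes
  -- totient ratio equals the product
  have hQ : (a.totient : ℚ) = a * ∏ p ∈ k.primesBelow, (1 - ((p : ℚ))⁻¹) := by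
    have := Nat.totient_eq_mul_prod_factors a
    rwa [hpf] at this
  have hfa : (a.totient : ℝ) = a * ∏ p ∈ k.primesBelow, (1 - ((p : ℝ))⁻¹) := by
    have := congrArg (fun q : ℚ => (q : ℝ)) hQ
    push_cast at this
    exact this
  have hratio : (a.totient : ℝ) / a = ∏ p ∈ k.primesBelow, (1 - ((p : ℝ))⁻¹) := by
    rw [hfa]
    field_simp
  set C : ℕ := Nat.primeCounting' (a + 1) with hC
  -- pick N₂ handling the (C + φ a)/n term
  have htend : Tendsto (fun n : ℕ => ((C : ℝ) + a.totient) / n) atTop (nhds 0) :=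
    tendsto_const_div_atTop_nhds_zero_nat _
  obtain ⟨N₂, hN₂⟩ := (Metric.tendsto_atTop.mp htend) (ε / 2) (half_pos hε)
  refine ⟨max (a + 1) (max N₂ 1), fun n hn => ?_⟩
  have hna : a + 1 ≤ n := le_trans (le_max_left _ _) hn
  have hn1 : 1 ≤ n := le_trans (le_trans (le_max_right _ _) (le_max_right _ _)) hn
  have hn0 : (0 : ℝ) < n := by exact_mod_cast hn1
  have ha0' : (0 : ℝ) < a := by exact_mod_cast ha0
  -- the key counting bound
  have hsplit : n + 1 = (a + 1) + (n - a) := by omega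
  have hb := Nat.primeCounting'_add_le ha0.ne' (lt_add_one a) (n - a)
  have hcount : n.primeCounting ≤ C + a.totient * ((n - a) / a + 1) := by
    have : n.primeCounting = Nat.primeCounting' (n + 1) := rfl
    rw [this, hsplit]
    exact hb
  have hcast : (n.primeCounting : ℝ) ≤ C + a.totient * ((n : ℝ) / a + 1) := by
    have h1 : (((n - a) / a : ℕ) : ℝ) ≤ ((n - a : ℕ) : ℝ) / a := Nat.cast_div_le
    have h2 : ((n - a : ℕ) : ℝ) ≤ (n : ℝ) := by exact_mod_cast Nat.sub_le n a
    have h3 : ((n - a : ℕ) : ℝ) / a ≤ (n : ℝ) / a := by gcongr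
    have := hcount
    have hc : (n.primeCounting : ℝ) ≤ (C : ℝ) + a.totient * ((((n - a) / a : ℕ) : ℝ) + 1) := by
      exact_mod_cast this
    calc (n.primeCounting : ℝ)
        ≤ (C : ℝ) + a.totient * ((((n - a) / a : ℕ) : ℝ) + 1) := hc
      _ ≤ (C : ℝ) + a.totient * ((n : ℝ) / a + 1) := by
          gcongr
          exact h1.trans h3
  have hdiv : (n.primeCounting : ℝ) / n ≤ ((C : ℝ) + a.totient) / n + (a.totient : ℝ) / a := by
    have h1 : (n.primeCounting : ℝ) / n ≤ ((C : ℝ) + a.totient * ((n : ℝ) / a + 1)) / n := by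
      gcongr
    have h2 : ((C : ℝ) + a.totient * ((n : ℝ) / a + 1)) / n
        = ((C : ℝ) + a.totient) / n + (a.totient : ℝ) / a := by
      field_simp
      ring
    rw [h2] at h1
    exact h1
  have hterm2 : (a.totient : ℝ) / a < ε / 2 := by rw [hratio]; exact hk
  have hterm1 : ((C : ℝ) + a.totient) / n < ε / 2 := by
    have := hN₂ n (le_trans (le_trans (le_max_left _ _) (le_max_right _ _)) hn)
    rwa [Real.dist_eq, sub_zero, abs_of_nonneg (by positivity)] at this
  rw [Real.dist_eq, sub_zero, abs_of_nonneg (by positivity)]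
  linarith
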